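/- For every permutation w ≠ id, the set of positions i such that w⁻¹(w(i)+1) < i is nonempty and finite. Moreover, letting i(w) denote its maximum and setting v = t_{w(i(w)), w(i(w))+1} ∘ w (the permutation obtained from w by swapping the values w(i(w)) and w(i(w))+1), we have ℓ(v) = ℓ(w) − 1 and v ⋖_{i(w)−1} w; in particular i(w) ≥ 2. -/

import Mathlib

/-- A permutation of the positive integers, modeled as a permutation of `ℕ`
fixing `0` (and, separately assumed, all but finitely many points). -/
def FinPerm (w : Equiv.Perm ℕ) : Prop :=
  w 0 = 0 ∧ {i : ℕ | w i ≠ i}.Finite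

/-- The length `ℓ(w)`: the number of inversions, i.e. pairs `i < j` with `w i > w j`. -/
noncomputable def len (w : Equiv.Perm ℕ) : ℕ :=
  {p : ℕ × ℕ | p.1 < p.2 ∧ w p.2 < w p.1}.ncard

/-- The set of descents: positions `i ≥ 1` with `w i > w (i+1)`. -/
def descents (w : Equiv.Perm ℕ) : Set ℕ :=
  {i : ℕ | 0 < i ∧ w (i + 1) < w i}

/-- `d₁(w)`: the first (smallest) descent of `w`. -/
noncomputable def d1 (w : Equiv.Perm ℕ) : ℕ := sInf (descents w)

/-- `d₂(w)`: the last (largest) descent of `w`. -/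
noncomputable def d2 (w : Equiv.Perm ℕ) : ℕ := sSup (descents w)

/-- `kCover k ρ π` means `ρ ⋖_k π`:  `π = ρ t_{a b}` for some positive
`a ≤ k < b`, with `ℓ(π) = ℓ(ρ) + 1`. -/
def kCover (k : ℕ) (ρ π : Equiv.Perm ℕ) : Prop :=
  ∃ a b : ℕ, 0 < a ∧ a ≤ k ∧ k < b ∧ π = ρ * Equiv.swap a b ∧ len π = len ρ + 1


/-- `i(w)`: the largest position `i` with `w⁻¹(w(i)+1) < i`. -/
noncomputable def iw (w : Equiv.Perm ℕ) : ℕ :=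
  sSup {i : ℕ | 0 < i ∧ w⁻¹ (w i + 1) < i}

/-- `φ(w) = t_{w(i(w)), w(i(w))+1} ∘ w`, swapping the values `w(i(w))` and `w(i(w))+1`. -/
noncomputable def phi (w : Equiv.Perm ℕ) : Equiv.Perm ℕ :=
  Equiv.swap (w (iw w)) (w (iw w) + 1) * w

/-- `κ(w) = i(w) - 1`. -/
noncomputable def kappa (w : Equiv.Perm ℕ) : ℕ := iw w - 1


private lemma swapLt {c x y : ℕ} (h : Equiv.swap c (c+1) x < Equiv.swap c (c+1) y) :
    x < y ∨ (x = c + 1 ∧ y = c) := by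
  simp only [Equiv.swap_apply_def] at h
  split_ifs at h <;> omega

private lemma swapLt' {c x y : ℕ} (h : x < y) :
    Equiv.swap c (c+1) x < Equiv.swap c (c+1) y ∨ (x = c ∧ y = c + 1) := by
  simp only [Equiv.swap_apply_def]
  split_ifs <;> omega

private lemma invFin {w : Equiv.Perm ℕ} (hfin : {i : ℕ | w i ≠ i}.Finite) :
    {p : ℕ × ℕ | p.1 < p.2 ∧ w p.2 < w p.1}.Finite := by
  obtain ⟨b, hb⟩ := hfin.bddAbove
  have hfix : ∀ j, b < j → w j = j := by
    intro j hj
    by_contra h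
    exact absurd (hb h) (by omega)
  have hlt : ∀ p, p ≤ b → w p ≤ b := by
    intro p hp
    by_contra h
    push_neg at h
    have h2 : w (w p) = w p := hfix (w p) h
    have h3 : w p = p := w.injective h2
    omega
  apply Set.Finite.subset ((Set.finite_Iic b).prod (Set.finite_Iic b))
  rintro ⟨p, q⟩ ⟨h1, h2⟩
  replace h1 : p < q := h1
  replace h2 : w q < w p := h2
  simp only [Set.mem_prod, Set.mem_Iic]
  by_cases hq : q ≤ b
  · exact ⟨by omega, hq⟩
  · exfalso
    push_neg at hq
    have hwq : w q = q := hfix q hq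
    by_cases hp : p ≤ b
    · have := hlt p hp; omega
    · push_neg at hp
      have := hfix p hp; omega
theorem stmt7 (w : Equiv.Perm ℕ) (hw : FinPerm w) (hne : w ≠ 1) :
    {i : ℕ | 0 < i ∧ w⁻¹ (w i + 1) < i}.Nonempty ∧
    {i : ℕ | 0 < i ∧ w⁻¹ (w i + 1) < i}.Finite ∧
    len (phi w) + 1 = len w ∧ kCover (kappa w) (phi w) w ∧ 2 ≤ iw w := by
  obtain ⟨h0, hfin⟩ := hw
  have hinv0 : w⁻¹ 0 = 0 := by
    conv_lhs => rw [← h0]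
    exact Equiv.symm_apply_apply w 0
  -- Nonemptiness
  have hS : {i : ℕ | 0 < i ∧ w⁻¹ (w i + 1) < i}.Nonempty := by
    by_contra hS
    rw [Set.not_nonempty_iff_eq_empty] at hS
    have hmem : ∀ i : ℕ, 0 < i → ¬ (w⁻¹ (w i + 1) < i) := by
      intro i hi hlt
      have : i ∈ ({i : ℕ | 0 < i ∧ w⁻¹ (w i + 1) < i}) := ⟨hi, hlt⟩
      rw [hS] at this
      exact this
    have hg : StrictMono (fun c => w⁻¹ c) := by
      apply strictMono_nat_of_lt_succ
      intro c
      rcases Nat.eq_zero_or_pos (w⁻¹ c) with h | h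
      · have hc0 : c = 0 := by
          have := congrArg w h
          rw [show ∀ x, w (w⁻¹ x) = x from w.apply_symm_apply] at this
          omega
        subst hc0
        simp only [hinv0, h]
        rcases Nat.eq_zero_or_pos (w⁻¹ 1) with h1 | h1
        · exfalso
          have := congrArg w h1
          rw [show ∀ x, w (w⁻¹ x) = x from w.apply_symm_apply] at this
          omega
        · exact h1
      · have := hmem (w⁻¹ c) h
        rw [show ∀ x, w (w⁻¹ x) = x from w.apply_symm_apply] at this
        push_neg at this
        have hne' : w⁻¹ (c + 1) ≠ w⁻¹ c := fun h' => by
          have := w⁻¹.injective h'; omega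
        omega
    have hle : ∀ n, n ≤ w⁻¹ n := fun n => hg.le_apply
    have hwle : ∀ n, w n ≤ n := by
      intro n
      have := hle (w n)
      rw [show ∀ x, w⁻¹ (w x) = x from w.symm_apply_apply] at this
      exact this
    have hid : ∀ n, w n = n := by
      intro n
      induction n using Nat.strong_induction_on with
      | _ n ih =>
        rcases lt_or_eq_of_le (hwle n) with h | h
        · exact w.injective (ih (w n) h)
        · exact h
    exact hne (Equiv.ext fun n => hid n)
  -- Finiteness
  obtain ⟨b, hb⟩ := hfin.bddAbove
  have hfix : ∀ j, b < j → w j = j := by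
    intro j hj
    by_contra h
    exact absurd (hb h) (by omega)
  have hSfin : {i : ℕ | 0 < i ∧ w⁻¹ (w i + 1) < i}.Finite := by
    apply Set.Finite.subset (Set.finite_Iic b)
    rintro i ⟨hi, hlt⟩
    simp only [Set.mem_Iic]
    by_contra h
    push_neg at h
    rw [hfix i h] at hlt
    have h2 : w (i + 1) = i + 1 := hfix (i + 1) (by omega)
    have : w⁻¹ (i + 1) = i + 1 := by
      conv_lhs => rw [← h2]
      exact Equiv.symm_apply_apply w (i + 1)
    omega
  refine ⟨hS, hSfin, ?_⟩
  -- iw w is in the set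
  have hiwmem : iw w ∈ {i : ℕ | 0 < i ∧ w⁻¹ (w i + 1) < i} :=
    Nat.sSup_mem hS hSfin.bddAbove
  obtain ⟨hipos, hjlt⟩ := hiwmem
  set i := iw w with hi_def
  set c := w i with hc_def
  set j := w⁻¹ (c + 1) with hj_def
  have hwj : w j = c + 1 := Equiv.apply_symm_apply w (c + 1)
  have hjpos : 0 < j := by
    rcases Nat.eq_zero_or_pos j with h | h
    · rw [h, h0] at hwj; omega
    · exact h
  have hii : 2 ≤ i := by omega
  -- phi w = swap c (c+1) * w
  have hphi : phi w = Equiv.swap c (c + 1) * w := rfl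
  set v := phi w with hv_def
  have hv : ∀ p, v p = Equiv.swap c (c + 1) (w p) := fun p => rfl
  have hji : j ≠ i := by omega
  -- inversion sets
  set A := {p : ℕ × ℕ | p.1 < p.2 ∧ w p.2 < w p.1} with hA_def
  set B := {p : ℕ × ℕ | p.1 < p.2 ∧ v p.2 < v p.1} with hB_def
  have hBA : B = A \ {(j, i)} := by
    ext ⟨p, q⟩
    simp only [hA_def, hB_def, Set.mem_setOf_eq, Set.mem_diff, Set.mem_singleton_iff,
      Prod.mk.injEq]
    constructor
    · rintro ⟨hpq, hlt⟩
      rw [hv, hv] at hlt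
      rcases swapLt hlt with h | ⟨h1, h2⟩
      · refine ⟨⟨hpq, h⟩, ?_⟩
        rintro ⟨rfl, rfl⟩
        rw [hwj, ← hc_def, Equiv.swap_apply_left, Equiv.swap_apply_right] at hlt
        omega
      · exfalso
        have hq : q = j := w.injective (by rw [h1, hwj])
        have hp : p = i := w.injective (h2.trans hc_def)
        omega
    · rintro ⟨⟨hpq, hlt⟩, hne'⟩
      refine ⟨hpq, ?_⟩
      rw [hv, hv]
      rcases swapLt' hlt with h | ⟨h1, h2⟩
      · exact h
      · exfalso
        have hq : q = i := w.injective (h1.trans hc_def)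
        have hp : p = j := w.injective (by rw [h2, hwj])
        exact hne' ⟨hp, hq⟩
  have hjiA : (j, i) ∈ A := ⟨hjlt, by show w i < w j; rw [hwj, ← hc_def]; omega⟩
  have hAfin : A.Finite := invFin hfin
  have hBfin : B.Finite := by rw [hBA]; exact hAfin.diff
  have hnotB : (j, i) ∉ B := by rw [hBA]; simp
  have hAins : A = insert (j, i) B := by
    rw [hBA, Set.insert_diff_singleton, Set.insert_eq_self.mpr hjiA]
  have hlen : len v + 1 = len w := by
    show B.ncard + 1 = A.ncard
    rw [hAins, Set.ncard_insert_of_notMem hnotB hBfin]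
  refine ⟨hlen, ⟨j, i, hjpos, by simp only [kappa, ← hi_def]; omega,
    by simp only [kappa, ← hi_def]; omega, ?_, hlen.symm⟩, hii⟩
  -- w = v * swap j i
  ext p
  simp only [Equiv.Perm.mul_apply]
  rcases eq_or_ne p j with rfl | hpj
  · rw [Equiv.swap_apply_left, hv, ← hc_def, Equiv.swap_apply_left, hwj]
  · rcases eq_or_ne p i with rfl | hpi
    · rw [Equiv.swap_apply_right, hv, hwj, Equiv.swap_apply_right, ← hc_def]
    · rw [Equiv.swap_apply_of_ne_of_ne hpj hpi, hv,
        Equiv.swap_apply_of_ne_of_ne (fun h => hpi (w.injective (h.trans hc_def)))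
          (fun h => hpj (w.injective (by rw [h, hwj])))]
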